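/- Let x* be segmented by the greedy algorithm into extreme markets {x^{S_l}}_{l=0}^{L} with masses y(x^{S_l}) = α^{l+1} ∏_{j=1}^{l}(1 − α^j). Let T > 0 be the first step with x^T_ī = 0, where v_ī = max{argmax_{v_j > v_{i*}} v_j x̄*_j}. Then sum_{j=0}^{T−1} y(x^{S_j}) = λ̲, where λ̲ = min_{v_j ≤ v_{i*}} [ (v_ī x̄*_ī)/v_j + 1 − x̄*_j ]. -/

import Mathlib

open Finset

/-- Proportion of consumers with valuation ≥ v k. -/
def barSum {K : ℕ} (x : Fin K → ℝ) (k : Fin K) : ℝ := ∑ j ∈ Finset.Ici k, x j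

/-- A market is a probability distribution over the K valuations. -/
def IsMarket {K : ℕ} (x : Fin K → ℝ) : Prop := (∀ i, 0 ≤ x i) ∧ ∑ i, x i = 1

/-- Price v k is optimal for market x. -/
def OptimalPrice {K : ℕ} (v x : Fin K → ℝ) (k : Fin K) : Prop :=
  ∀ i, v i * barSum x i ≤ v k * barSum x k

/-- v k is the largest optimal price for x (tie-breaking against consumers). -/
def LargestOptimal {K : ℕ} (v x : Fin K → ℝ) (k : Fin K) : Prop :=
  OptimalPrice v x k ∧ ∀ j, OptimalPrice v x j → j ≤ k

/-- μ(v i, S): smallest element of S strictly greater than i (junk value i if none). -/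
noncomputable def nextIn {K : ℕ} (S : Finset (Fin K)) (i : Fin K) : Fin K :=
  if h : (S.filter (fun j => i < j)).Nonempty then (S.filter (fun j => i < j)).min' h else i

/-- The extreme market x^S of Bergemann–Brooks–Morris. -/
noncomputable def extreme {K : ℕ} (v : Fin K → ℝ) (S : Finset (Fin K)) (hS : S.Nonempty) :
    Fin K → ℝ := fun i =>
  if i ∉ S then 0
  else if i = S.max' hS then v (S.min' hS) / v (S.max' hS)
  else v (S.min' hS) * (1 / v i - 1 / v (nextIn S i))

/-- A segmentation σ with label weights f is consistent with aggregate market x. -/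
def Consistent {K n : ℕ} (x : Fin K → ℝ) (f : Fin n → ℝ) (σ : Fin n → Fin K → ℝ) : Prop :=
  (∀ s, IsMarket (σ s)) ∧ ∀ k, ∑ s, f s * σ s k = x k

/-- The lower bound λ̲. -/
noncomputable def lamLow {K : ℕ} (v x : Fin K → ℝ) (istar : Fin K)
    (hIoi : (Finset.Ioi istar).Nonempty) : ℝ :=
  (Finset.Iic istar).inf' ⟨istar, Finset.mem_Iic.mpr le_rfl⟩
    (fun j => ((Finset.Ioi istar).sup' hIoi fun i => v i * barSum x i) / v j + 1 - barSum x j)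

/-- The upper bound λ̄. -/
noncomputable def lamHigh {K : ℕ} (v x : Fin K → ℝ) (istar : Fin K)
    (hIio : (Finset.Iio istar).Nonempty) : ℝ :=
  (Finset.Iio istar).sup' hIio
    (fun j => 1 - (v istar * barSum x istar - v j * barSum x j) / (v istar - v j))

/-- Consumer surplus of segmentation σ with weights f when prices p are charged. -/
def CS {K n : ℕ} (v : Fin K → ℝ) (f : Fin n → ℝ) (σ : Fin n → Fin K → ℝ)
    (p : Fin n → Fin K) : ℝ :=
  ∑ s, f s * ∑ j ∈ Finset.Ici (p s), (v j - v (p s)) * σ s j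

/-- The support of x as a finset. -/
noncomputable def suppF {K : ℕ} (x : Fin K → ℝ) : Finset (Fin K) :=
  Finset.univ.filter fun i => x i ≠ 0

/-- One step of the greedy algorithm: the next residual market. -/
noncomputable def greedyStep {K : ℕ} (v x : Fin K → ℝ) : Fin K → ℝ :=
  if h : (suppF x).Nonempty then
    if x = extreme v (suppF x) h then 0
    else
      fun i => extreme v (suppF x) h i +
        (sInf {t : ℝ | 0 ≤ t ∧ ∃ j, extreme v (suppF x) h j
            + t * (x j - extreme v (suppF x) h j) < 0})
          * (x i - extreme v (suppF x) h i)
  else 0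

/-- The residual market x^l after l steps of the greedy algorithm started at x. -/
noncomputable def resid {K : ℕ} (v x : Fin K → ℝ) : ℕ → Fin K → ℝ
  | 0 => x
  | l + 1 => greedyStep v (resid v x l)

/-- The share α of the current residual assigned to the extreme market on its support. -/
noncomputable def alphaStep {K : ℕ} (v x : Fin K → ℝ) : ℝ :=
  if h : (suppF x).Nonempty then
    if x = extreme v (suppF x) h then 1
    else 1 - 1 / sInf {t : ℝ | 0 ≤ t ∧ ∃ j, extreme v (suppF x) h j
        + t * (x j - extreme v (suppF x) h j) < 0}
  else 1

/-- The mass y(x^{S_l}) assigned by the greedy algorithm to the l-th extreme market. -/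
noncomputable def greedyMass {K : ℕ} (v x : Fin K → ℝ) (l : ℕ) : ℝ :=
  alphaStep v (resid v x l) * ∏ j ∈ Finset.range l, (1 - alphaStep v (resid v x j))

section Aux
open Finset
variable {K : ℕ}

lemma mem_suppF {x : Fin K → ℝ} {i : Fin K} : i ∈ suppF x ↔ x i ≠ 0 := by
  simp [suppF]

lemma not_mem_suppF {x : Fin K → ℝ} {i : Fin K} (h : i ∉ suppF x) : x i = 0 := by
  by_contra hc; exact h (mem_suppF.mpr hc)

lemma suppF_nonempty {x : Fin K → ℝ} (hx : IsMarket x) : (suppF x).Nonempty := by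
  by_contra h
  rw [Finset.not_nonempty_iff_eq_empty] at h
  have : ∑ i, x i = 0 := by
    apply Finset.sum_eq_zero
    intro i _
    by_contra hi
    have : i ∈ suppF x := mem_suppF.mpr hi
    simp [h] at this
  rw [hx.2] at this; norm_num at this

lemma barSum_nonneg {x : Fin K → ℝ} (hx : ∀ i, 0 ≤ x i) (k : Fin K) : 0 ≤ barSum x k :=
  Finset.sum_nonneg fun i _ => hx i

lemma single_le_barSum {x : Fin K → ℝ} (hx : ∀ i, 0 ≤ x i) (k : Fin K) : x k ≤ barSum x k := by
  apply Finset.single_le_sum (fun i _ => hx i)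
  exact Finset.mem_Ici.mpr le_rfl

lemma barSum_le_one {x : Fin K → ℝ} (hx : IsMarket x) (k : Fin K) : barSum x k ≤ 1 := by
  rw [← hx.2]
  exact Finset.sum_le_sum_of_subset_of_nonneg (Finset.subset_univ _) fun i _ _ => hx.1 i

/-- If x vanishes on [j, j'), then barSum x j = barSum x j'. -/
lemma barSum_congr {x : Fin K → ℝ} {j j' : Fin K} (hle : j ≤ j')
    (h : ∀ k, j ≤ k → k < j' → x k = 0) : barSum x j = barSum x j' := by
  unfold barSum
  rw [eq_comm]
  apply Finset.sum_subset (Finset.Ici_subset_Ici.mpr hle)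
  intro k hk hk'
  rw [Finset.mem_Ici] at hk
  rw [Finset.mem_Ici, not_le] at hk'
  exact h k hk hk'

lemma barSum_split {x : Fin K → ℝ} {j j' : Fin K} (hlt : j < j')
    (h : ∀ k, j < k → k < j' → x k = 0) : barSum x j = x j + barSum x j' := by
  have h1 : barSum x j = x j + ∑ k ∈ Finset.Ioi j, x k := by
    unfold barSum
    rw [← Finset.Ioi_insert j, Finset.sum_insert (by simp)]
  have h2 : barSum x j' = ∑ k ∈ Finset.Ioi j, x k := by
    unfold barSum
    apply Finset.sum_subset
    · intro k hk
      rw [Finset.mem_Ici] at hk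
      exact Finset.mem_Ioi.mpr (lt_of_lt_of_le hlt hk)
    · intro k hk hk'
      rw [Finset.mem_Ioi] at hk
      rw [Finset.mem_Ici, not_le] at hk'
      exact h k hk hk'
  rw [h1, ← h2]

lemma barSum_last {x : Fin K → ℝ} {j : Fin K} (h : ∀ k, j < k → x k = 0) :
    barSum x j = x j := by
  have h1 : barSum x j = x j + ∑ k ∈ Finset.Ioi j, x k := by
    unfold barSum
    rw [← Finset.Ioi_insert j, Finset.sum_insert (by simp)]
  rw [h1, Finset.sum_eq_zero (fun k hk => h k (Finset.mem_Ioi.mp hk)), add_zero]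

lemma sum_eq_barSum_bot {x : Fin K → ℝ} {m : Fin K} (h : ∀ k, k < m → x k = 0) :
    ∑ i, x i = barSum x m := by
  unfold barSum
  rw [eq_comm]
  apply Finset.sum_subset (Finset.subset_univ _)
  intro k _ hk'
  rw [Finset.mem_Ici, not_le] at hk'
  exact h k hk'

section Extreme
variable (v : Fin K → ℝ) (hmono : StrictMono v) (hpos : ∀ i, 0 < v i)
variable (S : Finset (Fin K)) (hS : S.Nonempty)

lemma extreme_not_mem {i : Fin K} (h : i ∉ S) : extreme v S hS i = 0 := by
  simp [extreme, h]

lemma nextIn_spec {i : Fin K} (hi : i ∈ S) (hmax : i ≠ S.max' hS) :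
    nextIn S i ∈ S ∧ i < nextIn S i ∧ ∀ k ∈ S, i < k → nextIn S i ≤ k := by
  have hne : (S.filter (fun j => i < j)).Nonempty := by
    refine ⟨S.max' hS, Finset.mem_filter.mpr ⟨S.max'_mem hS, ?_⟩⟩
    exact lt_of_le_of_ne (S.le_max' i hi) hmax
  unfold nextIn
  rw [dif_pos hne]
  have hm := Finset.min'_mem _ hne
  rw [Finset.mem_filter] at hm
  exact ⟨hm.1, hm.2, fun k hk hik => Finset.min'_le _ k (Finset.mem_filter.mpr ⟨hk, hik⟩)⟩

lemma extreme_mem_ne {i : Fin K} (hi : i ∈ S) (hmax : i ≠ S.max' hS) :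
    extreme v S hS i = v (S.min' hS) * (1 / v i - 1 / v (nextIn S i)) := by
  simp [extreme, hi, hmax]

lemma extreme_max :
    extreme v S hS (S.max' hS) = v (S.min' hS) / v (S.max' hS) := by
  simp [extreme, S.max'_mem hS]

include hmono hpos in
lemma extreme_pos {i : Fin K} (hi : i ∈ S) : 0 < extreme v S hS i := by
  by_cases hmax : i = S.max' hS
  · rw [hmax, extreme_max]
    exact div_pos (hpos _) (hpos _)
  · rw [extreme_mem_ne v S hS hi hmax]
    obtain ⟨hν, hlt, _⟩ := nextIn_spec S hS hi hmax
    apply mul_pos (hpos _)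
    rw [sub_pos]
    exact one_div_lt_one_div_of_lt (hpos _) (hmono hlt)

include hmono hpos in
lemma extreme_nonneg (i : Fin K) : 0 ≤ extreme v S hS i := by
  by_cases hi : i ∈ S
  · exact le_of_lt (extreme_pos v hmono hpos S hS hi)
  · rw [extreme_not_mem v S hS hi]

include hmono hpos in
lemma extreme_barSum : ∀ (n : ℕ) (i : Fin K), i ∈ S → (S.filter (fun j => i < j)).card = n →
    barSum (extreme v S hS) i = v (S.min' hS) / v i := by
  intro n
  induction n using Nat.strong_induction_on with
  | _ n ih =>
    intro i hi hcard
    by_cases hmax : i = S.max' hS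
    · subst hmax
      rw [barSum_last, extreme_max]
      intro k hk
      apply extreme_not_mem
      intro hkS
      exact absurd (S.le_max' k hkS) (not_le.mpr hk)
    · obtain ⟨hν, hlt, hmin⟩ := nextIn_spec S hS hi hmax
      set ν := nextIn S i with hνdef
      have hsplit : barSum (extreme v S hS) i = extreme v S hS i + barSum (extreme v S hS) ν := by
        apply barSum_split hlt
        intro k hk1 hk2
        apply extreme_not_mem
        intro hkS
        exact absurd (hmin k hkS hk1) (not_le.mpr hk2)
      have hsub : (S.filter (fun j => ν < j)).card < n := by
        rw [← hcard]
        apply Finset.card_lt_card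
        constructor
        · intro k hk
          rw [Finset.mem_filter] at hk ⊢
          exact ⟨hk.1, lt_trans hlt hk.2⟩
        · intro hsub
          have : ν ∈ S.filter (fun j => ν < j) := hsub (Finset.mem_filter.mpr ⟨hν, hlt⟩)
          rw [Finset.mem_filter] at this
          exact lt_irrefl _ this.2
      rw [hsplit, ih _ hsub ν hν rfl, extreme_mem_ne v S hS hi hmax, ← hνdef]
      have h1 : v i ≠ 0 := ne_of_gt (hpos i)
      have h2 : v ν ≠ 0 := ne_of_gt (hpos ν)
      field_simp
      ring

include hmono hpos in
lemma extreme_barSum_mem {i : Fin K} (hi : i ∈ S) :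
    barSum (extreme v S hS) i = v (S.min' hS) / v i :=
  extreme_barSum v hmono hpos S hS _ i hi rfl

include hmono hpos in
lemma extreme_sum : ∑ i, extreme v S hS i = 1 := by
  have h1 : ∑ i, extreme v S hS i = barSum (extreme v S hS) (S.min' hS) := by
    apply sum_eq_barSum_bot
    intro k hk
    apply extreme_not_mem
    intro hkS
    exact absurd (S.min'_le k hkS) (not_le.mpr hk)
  rw [h1, extreme_barSum_mem v hmono hpos S hS (S.min'_mem hS)]
  exact div_self (ne_of_gt (hpos _))

include hmono hpos in
lemma extreme_isMarket : IsMarket (extreme v S hS) :=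
  ⟨extreme_nonneg v hmono hpos S hS, extreme_sum v hmono hpos S hS⟩

end Extreme
end Aux
section Step
set_option linter.unusedSectionVars false
open Finset
variable {K : ℕ} (v : Fin K → ℝ) (hmono : StrictMono v) (hpos : ∀ i, 0 < v i)
    (x : Fin K → ℝ) (hx : IsMarket x)

lemma barSum_eq_zero_of {z : Fin K → ℝ} {k : Fin K} (h : ∀ l, k ≤ l → z l = 0) :
    barSum z k = 0 :=
  Finset.sum_eq_zero fun l hl => h l (Finset.mem_Ici.mp hl)

/-- The next support point of z at or after k. -/
lemma exists_next {z : Fin K → ℝ} {k j0 : Fin K} (hj0 : k ≤ j0) (hz : z j0 ≠ 0) :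
    ∃ μ, k ≤ μ ∧ z μ ≠ 0 ∧ (∀ l, k ≤ l → z l ≠ 0 → μ ≤ l) ∧ barSum z k = barSum z μ := by
  have hne : (Finset.univ.filter fun l => k ≤ l ∧ z l ≠ 0).Nonempty :=
    ⟨j0, Finset.mem_filter.mpr ⟨Finset.mem_univ _, hj0, hz⟩⟩
  set μ := (Finset.univ.filter fun l => k ≤ l ∧ z l ≠ 0).min' hne with hμ
  have hμmem := Finset.min'_mem _ hne
  rw [Finset.mem_filter] at hμmem
  refine ⟨μ, hμmem.2.1, hμmem.2.2, ?_, ?_⟩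
  · intro l hl hzl
    exact Finset.min'_le _ l (Finset.mem_filter.mpr ⟨Finset.mem_univ _, hl, hzl⟩)
  · apply barSum_congr hμmem.2.1
    intro l hl1 hl2
    by_contra hzl
    exact absurd (Finset.min'_le _ l (Finset.mem_filter.mpr ⟨Finset.mem_univ _, hl1, hzl⟩))
      (not_le.mpr hl2)

include hmono hpos hx in
lemma step_spec (hS : (suppF x).Nonempty) (hne : x ≠ extreme v (suppF x) hS) :
    ∃ t : ℝ, 1 < t ∧
      sInf {t : ℝ | 0 ≤ t ∧ ∃ j, extreme v (suppF x) hS j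
          + t * (x j - extreme v (suppF x) hS j) < 0} = t ∧
      ∀ j, 0 ≤ extreme v (suppF x) hS j + t * (x j - extreme v (suppF x) hS j) := by
  classical
  set e := extreme v (suppF x) hS with he
  have hesum : ∑ i, e i = 1 := extreme_sum v hmono hpos _ hS
  have henn : ∀ i, 0 ≤ e i := extreme_nonneg v hmono hpos _ hS
  have hD : (Finset.univ.filter fun j => x j < e j).Nonempty := by
    by_contra hD
    rw [Finset.not_nonempty_iff_eq_empty] at hD
    have hge : ∀ j, e j ≤ x j := by
      intro j
      by_contra hc
      push_neg at hc
      have : j ∈ Finset.univ.filter fun j => x j < e j :=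
        Finset.mem_filter.mpr ⟨Finset.mem_univ _, hc⟩
      simp [hD] at this
    have hsum : ∑ i, (x i - e i) = 0 := by
      rw [Finset.sum_sub_distrib, hx.2, hesum, sub_self]
    have hzero := (Finset.sum_eq_zero_iff_of_nonneg
      (fun i _ => sub_nonneg.mpr (hge i))).mp hsum
    apply hne
    funext j
    have := hzero j (Finset.mem_univ j)
    linarith
  set D := Finset.univ.filter fun j => x j < e j with hDdef
  have hDfact : ∀ j ∈ D, x j < e j := fun j hj => (Finset.mem_filter.mp hj).2
  set t₀ := D.inf' hD (fun j => e j / (e j - x j)) with ht₀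
  have hratio_ge : ∀ j ∈ D, 1 ≤ e j / (e j - x j) := by
    intro j hj
    have h1 := hDfact j hj
    have h2 := hx.1 j
    rw [le_div_iff₀ (by linarith)]
    linarith
  have h1le : 1 ≤ t₀ := Finset.le_inf' hD _ hratio_ge
  have hAeq : {t : ℝ | 0 ≤ t ∧ ∃ j, e j + t * (x j - e j) < 0} = Set.Ioi t₀ := by
    ext t
    simp only [Set.mem_setOf_eq, Set.mem_Ioi]
    constructor
    · rintro ⟨ht0, j, hj⟩
      have hxj : x j < e j := by
        by_contra hc
        push_neg at hc
        nlinarith [henn j]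
      have hjD : j ∈ D := Finset.mem_filter.mpr ⟨Finset.mem_univ _, hxj⟩
      have : e j / (e j - x j) < t := by
        rw [div_lt_iff₀ (by linarith)]
        nlinarith
      exact lt_of_le_of_lt (Finset.inf'_le _ hjD) this
    · intro ht
      obtain ⟨j, hjD, hj⟩ := Finset.exists_mem_eq_inf' hD (fun j => e j / (e j - x j))
      have hxj : x j < e j := hDfact j hjD
      refine ⟨by linarith, j, ?_⟩
      have hdlt : e j / (e j - x j) < t := by rw [← hj]; exact ht
      rw [div_lt_iff₀ (by linarith)] at hdlt
      nlinarith
  refine ⟨t₀, ?_, ?_, ?_⟩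
  · rcases eq_or_lt_of_le h1le with h1 | h1
    · exfalso
      obtain ⟨j, hjD, hj⟩ := Finset.exists_mem_eq_inf' hD (fun j => e j / (e j - x j))
      have hxj : x j < e j := hDfact j hjD
      have hej : 0 < e j := lt_of_le_of_lt (hx.1 j) hxj
      have hxj0 : x j = 0 := by
        have : e j / (e j - x j) = 1 := by rw [← hj, ← ht₀, ← h1]
        rw [div_eq_one_iff_eq (by linarith)] at this
        linarith
      have hjS : j ∈ suppF x := by
        by_contra hjS
        have : e j = 0 := extreme_not_mem v _ hS hjS
        linarith
      exact (mem_suppF.mp hjS) hxj0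
    · exact h1
  · rw [hAeq]
    exact csInf_Ioi
  · intro j
    by_contra hc
    push_neg at hc
    have : t₀ ∈ {t : ℝ | 0 ≤ t ∧ ∃ j, e j + t * (x j - e j) < 0} := ⟨by linarith, j, hc⟩
    rw [hAeq] at this
    exact lt_irrefl _ (Set.mem_Ioi.mp this)

end Step
section Step2
set_option linter.unusedSectionVars false
open Finset
variable {K : ℕ} (v : Fin K → ℝ) (hmono : StrictMono v) (hpos : ∀ i, 0 < v i)
    (x : Fin K → ℝ) (hx : IsMarket x) (hS : (suppF x).Nonempty)
    (hne : x ≠ extreme v (suppF x) hS) (t : ℝ) (ht1 : 1 < t)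
    (hsInf : sInf {t : ℝ | 0 ≤ t ∧ ∃ j, extreme v (suppF x) hS j
        + t * (x j - extreme v (suppF x) hS j) < 0} = t)
    (hP2 : ∀ j, 0 ≤ extreme v (suppF x) hS j + t * (x j - extreme v (suppF x) hS j))

include hne hsInf in
lemma greedyStep_eq :
    greedyStep v x = fun k => extreme v (suppF x) hS k
      + t * (x k - extreme v (suppF x) hS k) := by
  unfold greedyStep
  rw [dif_pos hS, if_neg hne, hsInf]

include hne hsInf in
lemma alphaStep_eq : alphaStep v x = 1 - 1 / t := by
  unfold alphaStep
  rw [dif_pos hS, if_neg hne, hsInf]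

include hne hsInf hP2 in
lemma gs_nonneg : ∀ k, 0 ≤ greedyStep v x k := by
  rw [greedyStep_eq v x hS hne t hsInf]
  exact hP2

include hne hsInf in
lemma gs_off {k : Fin K} (hk : k ∉ suppF x) : greedyStep v x k = 0 := by
  rw [greedyStep_eq v x hS hne t hsInf]
  simp only
  rw [extreme_not_mem v _ hS hk, not_mem_suppF hk]
  ring

include hmono hpos hx hne hsInf in
lemma gs_sum : ∑ k, greedyStep v x k = 1 := by
  rw [greedyStep_eq v x hS hne t hsInf]
  simp only
  rw [Finset.sum_add_distrib, ← Finset.mul_sum, Finset.sum_sub_distrib, hx.2,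
    extreme_sum v hmono hpos _ hS]
  ring

include hmono hpos hx hne hsInf hP2 in
lemma gs_isMarket : IsMarket (greedyStep v x) :=
  ⟨gs_nonneg v x hS hne t hsInf hP2, gs_sum v hmono hpos x hx hS hne t hsInf⟩

include hne hsInf in
lemma gs_barSum (k : Fin K) :
    barSum (greedyStep v x) k = barSum (extreme v (suppF x) hS) k
      + t * (barSum x k - barSum (extreme v (suppF x) hS) k) := by
  rw [greedyStep_eq v x hS hne t hsInf]
  unfold barSum
  rw [Finset.sum_add_distrib, ← Finset.mul_sum, Finset.sum_sub_distrib]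

include hmono hpos hne hsInf in
lemma gs_barSum_mem {k : Fin K} (hk : k ∈ suppF x) :
    barSum (greedyStep v x) k = v ((suppF x).min' hS) / v k
      + t * (barSum x k - v ((suppF x).min' hS) / v k) := by
  rw [gs_barSum v x hS hne t hsInf, extreme_barSum_mem v hmono hpos _ hS hk]

include hmono hpos hne hsInf in
lemma gs_rev_mem {k : Fin K} (hk : k ∈ suppF x) :
    v k * barSum (greedyStep v x) k = v ((suppF x).min' hS)
      + t * (v k * barSum x k - v ((suppF x).min' hS)) := by
  rw [gs_barSum_mem v hmono hpos x hS hne t hsInf hk]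
  have h1 : v k ≠ 0 := ne_of_gt (hpos k)
  have h2 : v ((suppF x).min' hS) / v k * v k = v ((suppF x).min' hS) :=
    div_mul_cancel₀ _ h1
  linear_combination (1 - t) * h2

include hmono hpos hne hsInf ht1 in
lemma gs_rev_le_iff {j k : Fin K} (hj : j ∈ suppF x) (hk : k ∈ suppF x) :
    v j * barSum (greedyStep v x) j ≤ v k * barSum (greedyStep v x) k ↔
    v j * barSum x j ≤ v k * barSum x k := by
  rw [gs_rev_mem v hmono hpos x hS hne t hsInf hj, gs_rev_mem v hmono hpos x hS hne t hsInf hk]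
  constructor <;> intro h <;> nlinarith

include hmono hpos hne hsInf ht1 in
lemma gs_rev_eq_iff {j k : Fin K} (hj : j ∈ suppF x) (hk : k ∈ suppF x) :
    v j * barSum (greedyStep v x) j = v k * barSum (greedyStep v x) k ↔
    v j * barSum x j = v k * barSum x k := by
  constructor <;> intro h
  · have h1 := (gs_rev_le_iff v hmono hpos x hS hne t ht1 hsInf hj hk).mp (le_of_eq h)
    have h2 := (gs_rev_le_iff v hmono hpos x hS hne t ht1 hsInf hk hj).mp (le_of_eq h.symm)
    linarith
  · have h1 := (gs_rev_le_iff v hmono hpos x hS hne t ht1 hsInf hj hk).mpr (le_of_eq h)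
    have h2 := (gs_rev_le_iff v hmono hpos x hS hne t ht1 hsInf hk hj).mpr (le_of_eq h.symm)
    linarith

include hx hmono in
lemma istar_mem_supp {istar : Fin K} (histar : LargestOptimal v x istar)
    (hposv : ∀ i, 0 < v i) : istar ∈ suppF x := by
  by_contra hc
  have hxi : x istar = 0 := not_mem_suppF hc
  by_cases hup : ∃ l, istar ≤ l ∧ x l ≠ 0
  · obtain ⟨l, hl1, hl2⟩ := hup
    obtain ⟨μ, hμ1, hμ2, _, hμ4⟩ := exists_next hl1 hl2
    have hμne : istar ≠ μ := by
      intro h; rw [← h] at hμ2; exact hμ2 hxi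
    have hμlt : istar < μ := lt_of_le_of_ne hμ1 hμne
    have hbpos : 0 < barSum x μ :=
      lt_of_lt_of_le (lt_of_le_of_ne (hx.1 μ) (Ne.symm hμ2)) (single_le_barSum hx.1 μ)
    have := histar.1 μ
    rw [hμ4] at this
    nlinarith [hmono hμlt]
  · push_neg at hup
    have hb0 : barSum x istar = 0 := barSum_eq_zero_of fun l hl => hup l hl
    obtain ⟨j, hj⟩ := suppF_nonempty hx
    have hxj : x j ≠ 0 := mem_suppF.mp hj
    have hbj : 0 < barSum x j :=
      lt_of_lt_of_le (lt_of_le_of_ne (hx.1 j) (Ne.symm hxj)) (single_le_barSum hx.1 j)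
    have := histar.1 j
    rw [hb0] at this
    nlinarith [hposv j]

include hmono hpos hx hne hsInf ht1 hP2 in
lemma istar_survives {istar : Fin K} (histar : LargestOptimal v x istar)
    (hiS : istar ∈ suppF x) (hM : ∃ j ∈ suppF x, istar < j) :
    0 < greedyStep v x istar := by
  classical
  set S := suppF x with hSdef
  set M := S.max' hS with hMdef
  set e := extreme v S hS with he
  obtain ⟨j0, hj0S, hj0lt⟩ := hM
  have histarM : istar ≠ M := by
    intro h
    exact absurd (S.le_max' j0 hj0S) (not_le.mpr (lt_of_eq_of_lt h.symm hj0lt))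
  have hMS : M ∈ S := S.max'_mem hS
  have histarltM : istar < M := lt_of_le_of_ne (S.le_max' istar hiS) histarM
  obtain ⟨hνS, hνlt, hνmin⟩ := nextIn_spec S hS hiS histarM
  set ν := nextIn S istar with hν
  -- basic positivity
  have hm := S.min'_mem hS
  set vm := v (S.min' hS) with hvm
  have hvmpos : 0 < vm := hpos _
  have hvipos : 0 < v istar := hpos _
  have hvνpos : 0 < v ν := hpos _
  have hvMpos : 0 < v M := hpos _
  have hviν : v istar < v ν := hmono hνlt
  -- structure equations
  have he_istar : e istar = vm * (1 / v istar - 1 / v ν) := extreme_mem_ne v S hS hiS histarM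
  have he_M : e M = vm / v M := extreme_max v S hS
  have hx_istar : barSum x istar = x istar + barSum x ν := by
    apply barSum_split hνlt
    intro k hk1 hk2
    by_contra hk
    exact absurd (hνmin k (mem_suppF.mpr hk) hk1) (not_le.mpr hk2)
  have hx_M : barSum x M = x M := by
    apply barSum_last
    intro k hk
    by_contra hkk
    exact absurd (S.le_max' k (mem_suppF.mpr hkk)) (not_le.mpr hk)
  -- revenue facts
  have hRν : v ν * barSum x ν < v istar * barSum x istar := by
    rcases lt_or_eq_of_le (histar.1 ν) with h | h
    · exact h
    · exfalso
      have hopt : OptimalPrice v x ν := by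
        intro i
        rw [h]
        exact histar.1 i
      exact absurd (histar.2 ν hopt) (not_le.mpr hνlt)
  have hRM : v M * barSum x M ≤ v istar * barSum x istar := histar.1 M
  -- key inequality : x M * e istar < x istar * e M
  have hkey : x M * e istar < x istar * e M := by
    have hP : (0:ℝ) < v istar * v ν * v M := by positivity
    rw [← mul_lt_mul_iff_left₀ hP]
    have h1 : x M * e istar * (v istar * v ν * v M) =
        (v M * barSum x M) * (vm * (v ν - v istar)) := by
      rw [he_istar, hx_M]
      field_simp
    have h2 : x istar * e M * (v istar * v ν * v M) =
        vm * ((v istar * barSum x istar) * v ν - (v ν * barSum x ν) * v istar) := by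
      have hxi : x istar = barSum x istar - barSum x ν := by linarith [hx_istar]
      rw [hxi, he_M]
      field_simp
    rw [h1, h2]
    nlinarith [mul_pos hvipos (sub_pos.mpr hRν),
      mul_nonneg (sub_nonneg.mpr hRM) (le_of_lt (sub_pos.mpr hviν))]
  -- positivity of e's
  have hei_pos : 0 < e istar := extreme_pos v hmono hpos S hS hiS
  have heM_pos : 0 < e M := extreme_pos v hmono hpos S hS hMS
  -- conclude
  rw [greedyStep_eq v x hS hne t hsInf]
  simp only
  by_cases hcase : e istar ≤ x istar
  · nlinarith
  · push_neg at hcase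
    have hxM_lt : x M < e M := by
      by_contra hc
      push_neg at hc
      nlinarith [hx.1 M]
    have hPM := hP2 M
    have h3 : t * (e M - x M) ≤ e M := by nlinarith
    have h4 : t * (e M - x M) * (e istar - x istar) ≤ e M * (e istar - x istar) :=
      mul_le_mul_of_nonneg_right h3 (le_of_lt (sub_pos.mpr hcase))
    have h5 : e M * (e istar - x istar) < e istar * (e M - x M) := by nlinarith
    have h6 : t * (e istar - x istar) * (e M - x M) < e istar * (e M - x M) := by nlinarith
    have h7 : t * (e istar - x istar) < e istar :=
      (mul_lt_mul_iff_left₀ (sub_pos.mpr hxM_lt)).mp h6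
    nlinarith
end Step2
section Step3
set_option linter.unusedSectionVars false
open Finset
variable {K : ℕ} (v : Fin K → ℝ) (hmono : StrictMono v) (hpos : ∀ i, 0 < v i)
    (x : Fin K → ℝ) (hx : IsMarket x) (hS : (suppF x).Nonempty)
    (hne : x ≠ extreme v (suppF x) hS) (t : ℝ) (ht1 : 1 < t)
    (hsInf : sInf {t : ℝ | 0 ≤ t ∧ ∃ j, extreme v (suppF x) hS j
        + t * (x j - extreme v (suppF x) hS j) < 0} = t)
    (hP2 : ∀ j, 0 ≤ extreme v (suppF x) hS j + t * (x j - extreme v (suppF x) hS j))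
    (istar ibar : Fin K) (histar : LargestOptimal v x istar)
    (hibar1 : istar < ibar)
    (hibar2 : ∀ j, istar < j → v j * barSum x j ≤ v ibar * barSum x ibar)
    (hibar3 : ∀ j, istar < j → v j * barSum x j = v ibar * barSum x ibar → j ≤ ibar)
    (hxib : x ibar ≠ 0)

include hmono hpos hx hne ht1 hsInf hP2 histar hibar1 hxib in
lemma gs_istar_pos : 0 < greedyStep v x istar :=
  istar_survives v hmono hpos x hx hS hne t ht1 hsInf hP2 histar
    (istar_mem_supp v hmono x hx histar hpos) ⟨ibar, mem_suppF.mpr hxib, hibar1⟩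

include hne hsInf in
lemma gs_supp_sub {k : Fin K} (hk : greedyStep v x k ≠ 0) : k ∈ suppF x := by
  by_contra hc
  exact hk (gs_off v x hS hne t hsInf hc)

include hmono hpos hx hne ht1 hsInf hP2 histar hibar1 hxib in
lemma gs_largestOptimal : LargestOptimal v (greedyStep v x) istar := by
  classical
  set x' := greedyStep v x with hx'
  have hnn : ∀ k, 0 ≤ x' k := gs_nonneg v x hS hne t hsInf hP2
  have hiS : istar ∈ suppF x := istar_mem_supp v hmono x hx histar hpos
  have hsurv : 0 < x' istar :=
    gs_istar_pos v hmono hpos x hx hS hne t ht1 hsInf hP2 istar ibar histar hibar1 hxib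
  have hbar_pos : 0 < barSum x' istar := lt_of_lt_of_le hsurv (single_le_barSum hnn istar)
  constructor
  · intro k
    by_cases hk : ∃ l, k ≤ l ∧ x' l ≠ 0
    · obtain ⟨l, hl1, hl2⟩ := hk
      obtain ⟨μ, hμ1, hμ2, hμ3, hμ4⟩ := exists_next hl1 hl2
      have hμS : μ ∈ suppF x := gs_supp_sub v x hS hne t hsInf hμ2
      have h1 : v k * barSum x' k ≤ v μ * barSum x' μ := by
        rw [hμ4]
        exact mul_le_mul_of_nonneg_right (hmono.monotone hμ1) (barSum_nonneg hnn μ)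
      have h2 : v μ * barSum x' μ ≤ v istar * barSum x' istar :=
        (gs_rev_le_iff v hmono hpos x hS hne t ht1 hsInf hμS hiS).mpr (histar.1 μ)
      exact le_trans h1 h2
    · push_neg at hk
      have hz : barSum x' k = 0 :=
        barSum_eq_zero_of fun l hl => (hk l hl)
      rw [hz, mul_zero]
      exact mul_nonneg (le_of_lt (hpos _)) (barSum_nonneg hnn _)
  · intro j hopt
    by_contra hc
    push_neg at hc
    have hj : 0 < v j * barSum x' j :=
      lt_of_lt_of_le (mul_pos (hpos istar) hbar_pos) (hopt istar)
    have hex : ∃ l, j ≤ l ∧ x' l ≠ 0 := by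
      by_contra hno
      push_neg at hno
      have : barSum x' j = 0 := barSum_eq_zero_of fun l hl => (hno l hl)
      rw [this, mul_zero] at hj
      exact lt_irrefl _ hj
    obtain ⟨l, hl1, hl2⟩ := hex
    obtain ⟨μ, hμ1, hμ2, hμ3, hμ4⟩ := exists_next hl1 hl2
    have hμS : μ ∈ suppF x := gs_supp_sub v x hS hne t hsInf hμ2
    rcases eq_or_lt_of_le hμ1 with heq | hlt
    · have hjS : j ∈ suppF x := heq ▸ hμS
      have hge : v istar * barSum x istar ≤ v j * barSum x j :=
        (gs_rev_le_iff v hmono hpos x hS hne t ht1 hsInf hiS hjS).mp (hopt istar)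
      have hRj : v j * barSum x j = v istar * barSum x istar :=
        le_antisymm (histar.1 j) hge
      have hoptj : OptimalPrice v x j := by
        intro i
        rw [hRj]
        exact histar.1 i
      exact absurd (histar.2 j hoptj) (not_le.mpr hc)
    · have hbμ : 0 < barSum x' μ :=
        lt_of_lt_of_le (lt_of_le_of_ne (hnn μ) (Ne.symm hμ2)) (single_le_barSum hnn μ)
      have h5 := hopt μ
      rw [hμ4] at h5
      nlinarith [hmono hlt]

include hmono hpos hx hne ht1 hsInf hP2 histar hibar1 hibar2 hibar3 hxib in
lemma gs_ibar_argmax (hib' : greedyStep v x ibar ≠ 0) :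
    (∀ j, istar < j → v j * barSum (greedyStep v x) j
        ≤ v ibar * barSum (greedyStep v x) ibar) ∧
    (∀ j, istar < j → v j * barSum (greedyStep v x) j
        = v ibar * barSum (greedyStep v x) ibar → j ≤ ibar) := by
  classical
  set x' := greedyStep v x with hx'
  have hnn : ∀ k, 0 ≤ x' k := gs_nonneg v x hS hne t hsInf hP2
  have hibS : ibar ∈ suppF x := mem_suppF.mpr hxib
  have hbib : 0 < barSum x' ibar :=
    lt_of_lt_of_le (lt_of_le_of_ne (hnn ibar) (Ne.symm hib')) (single_le_barSum hnn ibar)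
  have key : ∀ j, istar < j → (v j * barSum x' j ≤ v ibar * barSum x' ibar ∧
      (v j * barSum x' j = v ibar * barSum x' ibar → j ≤ ibar)) := by
    intro j hj
    by_cases hk : ∃ l, j ≤ l ∧ x' l ≠ 0
    · obtain ⟨l, hl1, hl2⟩ := hk
      obtain ⟨μ, hμ1, hμ2, hμ3, hμ4⟩ := exists_next hl1 hl2
      have hμS : μ ∈ suppF x := gs_supp_sub v x hS hne t hsInf hμ2
      have hμgt : istar < μ := lt_of_lt_of_le hj hμ1
      have hRμ : v μ * barSum x' μ ≤ v ibar * barSum x' ibar :=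
        (gs_rev_le_iff v hmono hpos x hS hne t ht1 hsInf hμS hibS).mpr (hibar2 μ hμgt)
      rcases eq_or_lt_of_le hμ1 with heq | hlt
      · have hjS : j ∈ suppF x := heq ▸ hμS
        constructor
        · exact (gs_rev_le_iff v hmono hpos x hS hne t ht1 hsInf hjS hibS).mpr (hibar2 j hj)
        · intro heq2
          exact hibar3 j hj
            ((gs_rev_eq_iff v hmono hpos x hS hne t ht1 hsInf hjS hibS).mp heq2)
      · have hbμ : 0 < barSum x' μ :=
          lt_of_lt_of_le (lt_of_le_of_ne (hnn μ) (Ne.symm hμ2)) (single_le_barSum hnn μ)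
        have hstrict : v j * barSum x' j < v ibar * barSum x' ibar := by
          rw [hμ4]
          nlinarith [hmono hlt]
        exact ⟨le_of_lt hstrict, fun h => absurd h (ne_of_lt hstrict)⟩
    · push_neg at hk
      have hz : barSum x' j = 0 := barSum_eq_zero_of fun l hl => (hk l hl)
      constructor
      · rw [hz, mul_zero]
        exact mul_nonneg (le_of_lt (hpos _)) (le_of_lt hbib)
      · intro h
        rw [hz, mul_zero] at h
        exact absurd h.symm (ne_of_gt (mul_pos (hpos _) hbib))
  exact ⟨fun j hj => (key j hj).1, fun j hj => (key j hj).2⟩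

include hmono hpos hx hne ht1 hsInf hP2 histar hibar1 hibar2 hxib in
lemma gs_exit (hib0 : greedyStep v x ibar = 0) : barSum (greedyStep v x) ibar = 0 := by
  classical
  set x' := greedyStep v x with hx'
  have hnn : ∀ k, 0 ≤ x' k := gs_nonneg v x hS hne t hsInf hP2
  have hibS : ibar ∈ suppF x := mem_suppF.mpr hxib
  by_contra hc
  have hex : ∃ l, ibar ≤ l ∧ x' l ≠ 0 := by
    by_contra hno
    push_neg at hno
    exact hc (barSum_eq_zero_of fun l hl => (hno l hl))
  obtain ⟨l, hl1, hl2⟩ := hex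
  obtain ⟨μ, hμ1, hμ2, hμ3, hμ4⟩ := exists_next hl1 hl2
  have hμS : μ ∈ suppF x := gs_supp_sub v x hS hne t hsInf hμ2
  have hμne : ibar ≠ μ := by
    intro h
    rw [← h] at hμ2
    exact hμ2 hib0
  have hμlt : ibar < μ := lt_of_le_of_ne hμ1 hμne
  have hμgt : istar < μ := lt_trans hibar1 hμlt
  have hbμ : 0 < barSum x' μ :=
    lt_of_lt_of_le (lt_of_le_of_ne (hnn μ) (Ne.symm hμ2)) (single_le_barSum hnn μ)
  have hRμ : v μ * barSum x' μ ≤ v ibar * barSum x' ibar :=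
    (gs_rev_le_iff v hmono hpos x hS hne t ht1 hsInf hμS hibS).mpr (hibar2 μ hμgt)
  rw [hμ4] at hRμ
  nlinarith [hmono hμlt]
end Step3
section Lam
set_option linter.unusedSectionVars false
open Finset
variable {K : ℕ} (v : Fin K → ℝ) (hmono : StrictMono v) (hpos : ∀ i, 0 < v i)

lemma lamLow_eq_ibar {z : Fin K → ℝ} {istar ibar : Fin K}
    (hIoi : (Finset.Ioi istar).Nonempty) (hibar1 : istar < ibar)
    (hibar2 : ∀ j, istar < j → v j * barSum z j ≤ v ibar * barSum z ibar) :
    lamLow v z istar hIoi = (Finset.Iic istar).inf' ⟨istar, Finset.mem_Iic.mpr le_rfl⟩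
      (fun j => (v ibar * barSum z ibar) / v j + 1 - barSum z j) := by
  unfold lamLow
  apply Finset.inf'_congr _ rfl
  intro j _
  have hsup : (Finset.Ioi istar).sup' hIoi (fun i => v i * barSum z i)
      = v ibar * barSum z ibar :=
    le_antisymm (Finset.sup'_le _ _ fun i hi => hibar2 i (Finset.mem_Ioi.mp hi))
      (Finset.le_sup' (fun i => v i * barSum z i) (Finset.mem_Ioi.mpr hibar1))
  rw [hsup]

include hmono hpos in
lemma inf_attained {z : Fin K → ℝ} {istar : Fin K} (hznn : ∀ i, 0 ≤ z i)
    (hzi : z istar ≠ 0) {c : ℝ} (hc : 0 ≤ c) :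
    ∃ j0, j0 ≤ istar ∧ z j0 ≠ 0 ∧
      (Finset.Iic istar).inf' ⟨istar, Finset.mem_Iic.mpr le_rfl⟩
          (fun j => c / v j + 1 - barSum z j)
        = c / v j0 + 1 - barSum z j0 := by
  obtain ⟨j, hjmem, hj⟩ := Finset.exists_mem_eq_inf'
    (⟨istar, Finset.mem_Iic.mpr le_rfl⟩ : (Finset.Iic istar).Nonempty)
    (fun j => c / v j + 1 - barSum z j)
  have hjle : j ≤ istar := Finset.mem_Iic.mp hjmem
  obtain ⟨μ, hμ1, hμ2, hμ3, hμ4⟩ := exists_next hjle hzi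
  have hμle : μ ≤ istar := hμ3 istar hjle hzi
  refine ⟨μ, hμle, hμ2, le_antisymm ?_ ?_⟩
  · exact Finset.inf'_le _ (Finset.mem_Iic.mpr hμle)
  · rw [hj]
    have hdiv : c / v μ ≤ c / v j :=
      div_le_div_of_nonneg_left hc (hpos j) (hmono.monotone hμ1)
    rw [hμ4]
    linarith

variable (x : Fin K → ℝ) (hx : IsMarket x) (hS : (suppF x).Nonempty)
    (hne : x ≠ extreme v (suppF x) hS) (t : ℝ) (ht1 : 1 < t)
    (hsInf : sInf {t : ℝ | 0 ≤ t ∧ ∃ j, extreme v (suppF x) hS j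
        + t * (x j - extreme v (suppF x) hS j) < 0} = t)
    (hP2 : ∀ j, 0 ≤ extreme v (suppF x) hS j + t * (x j - extreme v (suppF x) hS j))
    (istar ibar : Fin K) (histar : LargestOptimal v x istar)
    (hibar1 : istar < ibar)
    (hibar2 : ∀ j, istar < j → v j * barSum x j ≤ v ibar * barSum x ibar)
    (hibar3 : ∀ j, istar < j → v j * barSum x j = v ibar * barSum x ibar → j ≤ ibar)
    (hxib : x ibar ≠ 0)

include hmono hpos hne hsInf ht1 in
lemma f_step {j : Fin K} (hj : j ∈ suppF x) (hib : ibar ∈ suppF x) :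
    (v ibar * barSum x ibar) / v j + 1 - barSum x j
      = (1 - 1/t) + (1/t) * ((v ibar * barSum (greedyStep v x) ibar) / v j + 1
          - barSum (greedyStep v x) j) := by
  rw [gs_rev_mem v hmono hpos x hS hne t hsInf hib, gs_barSum_mem v hmono hpos x hS hne t hsInf hj]
  have h1 : v j ≠ 0 := ne_of_gt (hpos j)
  have h2 : t ≠ 0 := by linarith
  field_simp
  ring

include hmono hpos hx hne hsInf ht1 hP2 histar hibar1 hibar2 hibar3 hxib in
lemma lamLow_step (hIoi : (Finset.Ioi istar).Nonempty)
    (hib' : greedyStep v x ibar ≠ 0) :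
    lamLow v x istar hIoi = (1 - 1/t) + (1/t) * lamLow v (greedyStep v x) istar hIoi := by
  classical
  set x' := greedyStep v x with hx'def
  have hnn' : ∀ k, 0 ≤ x' k := gs_nonneg v x hS hne t hsInf hP2
  have hiS : istar ∈ suppF x := istar_mem_supp v hmono x hx histar hpos
  have hibS : ibar ∈ suppF x := mem_suppF.mpr hxib
  have hsurv : 0 < x' istar :=
    gs_istar_pos v hmono hpos x hx hS hne t ht1 hsInf hP2 istar ibar histar hibar1 hxib
  have hibar2' := (gs_ibar_argmax v hmono hpos x hx hS hne t ht1 hsInf hP2 istar ibar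
    histar hibar1 hibar2 hibar3 hxib hib').1
  have hc : 0 ≤ v ibar * barSum x ibar :=
    mul_nonneg (le_of_lt (hpos _)) (barSum_nonneg hx.1 _)
  have hc' : 0 ≤ v ibar * barSum x' ibar :=
    mul_nonneg (le_of_lt (hpos _)) (barSum_nonneg hnn' _)
  have ht0 : 0 < 1/t := by positivity
  rw [lamLow_eq_ibar v hIoi hibar1 hibar2, lamLow_eq_ibar v hIoi hibar1 hibar2']
  apply le_antisymm
  · obtain ⟨j1, hj1le, hj1ne, hj1⟩ := inf_attained v hmono hpos hnn'
      (ne_of_gt hsurv) hc'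
    have hj1S : j1 ∈ suppF x := gs_supp_sub v x hS hne t hsInf hj1ne
    have hstep := f_step v hmono hpos x hS hne t ht1 hsInf ibar hj1S hibS
    calc (Finset.Iic istar).inf' _ (fun j => (v ibar * barSum x ibar) / v j + 1 - barSum x j)
        ≤ (v ibar * barSum x ibar) / v j1 + 1 - barSum x j1 :=
          Finset.inf'_le _ (Finset.mem_Iic.mpr hj1le)
      _ = (1 - 1/t) + (1/t) * ((v ibar * barSum x' ibar) / v j1 + 1 - barSum x' j1) := hstep
      _ = (1 - 1/t) + (1/t) * (Finset.Iic istar).inf' _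
            (fun j => (v ibar * barSum x' ibar) / v j + 1 - barSum x' j) := by rw [← hj1]
  · obtain ⟨j0, hj0le, hj0ne, hj0⟩ := inf_attained v hmono hpos hx.1
      (mem_suppF.mp hiS) hc
    have hj0S : j0 ∈ suppF x := mem_suppF.mpr hj0ne
    have hstep := f_step v hmono hpos x hS hne t ht1 hsInf ibar hj0S hibS
    have hle : (Finset.Iic istar).inf' ⟨istar, Finset.mem_Iic.mpr le_rfl⟩
        (fun j => (v ibar * barSum x' ibar) / v j + 1 - barSum x' j)
        ≤ (v ibar * barSum x' ibar) / v j0 + 1 - barSum x' j0 :=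
      Finset.inf'_le _ (Finset.mem_Iic.mpr hj0le)
    rw [hj0, hstep]
    nlinarith
end Lam

section Lam2
set_option linter.unusedSectionVars false
open Finset
variable {K : ℕ} (v : Fin K → ℝ) (hmono : StrictMono v) (hpos : ∀ i, 0 < v i)
    (x : Fin K → ℝ) (hx : IsMarket x) (hS : (suppF x).Nonempty)
    (hne : x ≠ extreme v (suppF x) hS) (t : ℝ) (ht1 : 1 < t)
    (hsInf : sInf {t : ℝ | 0 ≤ t ∧ ∃ j, extreme v (suppF x) hS j
        + t * (x j - extreme v (suppF x) hS j) < 0} = t)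
    (hP2 : ∀ j, 0 ≤ extreme v (suppF x) hS j + t * (x j - extreme v (suppF x) hS j))
    (istar ibar : Fin K) (histar : LargestOptimal v x istar)
    (hibar1 : istar < ibar)
    (hibar2 : ∀ j, istar < j → v j * barSum x j ≤ v ibar * barSum x ibar)
    (hxib : x ibar ≠ 0)

include hmono hpos hx hne hsInf ht1 hP2 histar hibar1 hibar2 hxib in
lemma lamLow_base (hIoi : (Finset.Ioi istar).Nonempty)
    (hib0 : greedyStep v x ibar = 0) :
    lamLow v x istar hIoi = 1 - 1/t := by
  classical
  set x' := greedyStep v x with hx'def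
  have hnn' : ∀ k, 0 ≤ x' k := gs_nonneg v x hS hne t hsInf hP2
  have hmkt' : IsMarket x' := gs_isMarket v hmono hpos x hx hS hne t hsInf hP2
  have hiS : istar ∈ suppF x := istar_mem_supp v hmono x hx histar hpos
  have hibS : ibar ∈ suppF x := mem_suppF.mpr hxib
  have hsurv : 0 < x' istar :=
    gs_istar_pos v hmono hpos x hx hS hne t ht1 hsInf hP2 istar ibar histar hibar1 hxib
  have hexit : barSum x' ibar = 0 :=
    gs_exit v hmono hpos x hx hS hne t ht1 hsInf hP2 istar ibar histar hibar1 hibar2 hxib hib0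
  have hc : 0 ≤ v ibar * barSum x ibar :=
    mul_nonneg (le_of_lt (hpos _)) (barSum_nonneg hx.1 _)
  rw [lamLow_eq_ibar v hIoi hibar1 hibar2]
  apply le_antisymm
  · -- use the minimum of the support of x'
    have hS' : (suppF x').Nonempty := ⟨istar, mem_suppF.mpr (ne_of_gt hsurv)⟩
    set m' := (suppF x').min' hS' with hm'def
    have hm'S' : m' ∈ suppF x' := (suppF x').min'_mem hS'
    have hm'le : m' ≤ istar := (suppF x').min'_le istar (mem_suppF.mpr (ne_of_gt hsurv))
    have hm'S : m' ∈ suppF x := gs_supp_sub v x hS hne t hsInf (mem_suppF.mp hm'S')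
    have hbar1 : barSum x' m' = 1 := by
      rw [← hmkt'.2]
      symm
      apply sum_eq_barSum_bot
      intro k hk
      by_contra hkk
      exact absurd ((suppF x').min'_le k (mem_suppF.mpr hkk)) (not_le.mpr hk)
    have hstep := f_step v hmono hpos x hS hne t ht1 hsInf ibar hm'S hibS
    calc (Finset.Iic istar).inf' _ (fun j => (v ibar * barSum x ibar) / v j + 1 - barSum x j)
        ≤ (v ibar * barSum x ibar) / v m' + 1 - barSum x m' :=
          Finset.inf'_le _ (Finset.mem_Iic.mpr hm'le)
      _ = (1 - 1/t) + (1/t) * ((v ibar * barSum x' ibar) / v m' + 1 - barSum x' m') := hstep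
      _ = 1 - 1/t := by rw [hexit, hbar1]; field_simp; simp
  · obtain ⟨j0, hj0le, hj0ne, hj0⟩ := inf_attained v hmono hpos hx.1
      (mem_suppF.mp hiS) hc
    have hj0S : j0 ∈ suppF x := mem_suppF.mpr hj0ne
    have hstep := f_step v hmono hpos x hS hne t ht1 hsInf ibar hj0S hibS
    rw [hj0, hstep, hexit]
    have hb1 : barSum x' j0 ≤ 1 := barSum_le_one hmkt' j0
    have ht0 : 0 < 1/t := by positivity
    have hvj : 0 < v j0 := hpos j0
    have : (0:ℝ) / v j0 = 0 := by simp
    rw [mul_zero] at *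
    nlinarith

include hmono hpos hx histar hibar1 hibar2 hxib in
lemma lamLow_extreme (hIoi : (Finset.Ioi istar).Nonempty)
    (heq : x = extreme v (suppF x) hS) :
    lamLow v x istar hIoi = 1 := by
  classical
  have hiS : istar ∈ suppF x := istar_mem_supp v hmono x hx histar hpos
  have hibS : ibar ∈ suppF x := mem_suppF.mpr hxib
  have hc : 0 ≤ v ibar * barSum x ibar :=
    mul_nonneg (le_of_lt (hpos _)) (barSum_nonneg hx.1 _)
  have hbar_ib : barSum x ibar = v ((suppF x).min' hS) / v ibar := by
    conv_lhs => rw [heq]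
    exact extreme_barSum_mem v hmono hpos _ hS hibS
  have hrev_ib : v ibar * barSum x ibar = v ((suppF x).min' hS) := by
    rw [hbar_ib]
    field_simp
    exact mul_div_cancel_left₀ _ (ne_of_gt (hpos ibar))
  rw [lamLow_eq_ibar v hIoi hibar1 hibar2]
  obtain ⟨j0, hj0le, hj0ne, hj0⟩ := inf_attained v hmono hpos hx.1
    (mem_suppF.mp hiS) hc
  have hj0S : j0 ∈ suppF x := mem_suppF.mpr hj0ne
  have hbar_j0 : barSum x j0 = v ((suppF x).min' hS) / v j0 := by
    conv_lhs => rw [heq]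
    exact extreme_barSum_mem v hmono hpos _ hS hj0S
  rw [hj0, hrev_ib, hbar_j0]
  field_simp
  ring
end Lam2
section Assemble
set_option linter.unusedSectionVars false
open Finset
variable {K : ℕ}

lemma resid_shift (v x : Fin K → ℝ) : ∀ l, resid v (greedyStep v x) l = resid v x (l + 1) := by
  intro l
  induction l with
  | zero => rfl
  | succ l ih =>
    show greedyStep v (resid v (greedyStep v x) l) = greedyStep v (resid v x (l + 1))
    rw [ih]

lemma mass_dec (v x : Fin K → ℝ) (T : ℕ) :
    ∑ j ∈ Finset.range (T + 1), greedyMass v x j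
      = alphaStep v x + (1 - alphaStep v x)
          * ∑ j ∈ Finset.range T, greedyMass v (greedyStep v x) j := by
  rw [Finset.sum_range_succ']
  have h0 : greedyMass v x 0 = alphaStep v x := by
    unfold greedyMass
    rw [Finset.range_zero, Finset.prod_empty, mul_one]
    rfl
  have hsh : ∀ j, greedyMass v x (j + 1)
      = (1 - alphaStep v x) * greedyMass v (greedyStep v x) j := by
    intro j
    unfold greedyMass
    rw [Finset.prod_range_succ']
    have hres : ∀ k, resid v x (k + 1) = resid v (greedyStep v x) k :=
      fun k => (resid_shift v x k).symm
    simp only [hres]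
    have h00 : resid v x 0 = x := rfl
    rw [h00]
    ring
  rw [Finset.sum_congr rfl fun j _ => hsh j, ← Finset.mul_sum, h0]
  ring
end Assemble
/-- the total mass assigned by the greedy algorithm to the extreme markets
containing v_ī (those before the first step T at which the residual mass at ī vanishes)
equals λ̲. -/
theorem greedy_mass_eq_lamLow {K : ℕ} (v : Fin K → ℝ) (hmono : StrictMono v)
    (hpos : ∀ i, 0 < v i) (x : Fin K → ℝ) (hx : IsMarket x)
    (istar : Fin K) (histar : LargestOptimal v x istar)
    (hIoi : (Finset.Ioi istar).Nonempty)
    (ibar : Fin K) (hibar1 : istar < ibar)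
    (hibar2 : ∀ j, istar < j → v j * barSum x j ≤ v ibar * barSum x ibar)
    (hibar3 : ∀ j, istar < j → v j * barSum x j = v ibar * barSum x ibar → j ≤ ibar)
    (T : ℕ) (hT0 : 0 < T) (hT : resid v x T ibar = 0)
    (hTfirst : ∀ l < T, resid v x l ibar ≠ 0) :
    ∑ j ∈ Finset.range T, greedyMass v x j = lamLow v x istar hIoi := by
  induction T generalizing x with
  | zero => exact absurd hT0 (lt_irrefl 0)
  | succ T ih =>
    have hS : (suppF x).Nonempty := suppF_nonempty hx
    have hxib : x ibar ≠ 0 := hTfirst 0 (Nat.succ_pos T)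
    by_cases hne : x = extreme v (suppF x) hS
    · -- x is itself extreme: one step and done
      have hstep : greedyStep v x = 0 := by
        unfold greedyStep
        rw [dif_pos hS, if_pos hne]
      have hT0' : T = 0 := by
        by_contra hT'
        apply hTfirst 1 (by omega)
        show greedyStep v (resid v x 0) ibar = 0
        show greedyStep v x ibar = 0
        rw [hstep]
        rfl
      subst hT0'
      rw [Finset.sum_range_one]
      have hα : alphaStep v x = 1 := by
        unfold alphaStep
        rw [dif_pos hS, if_pos hne]
      have hm0 : greedyMass v x 0 = alphaStep v x := by
        unfold greedyMass
        rw [Finset.range_zero, Finset.prod_empty, mul_one]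
        rfl
      rw [hm0, hα,
        lamLow_extreme v hmono hpos x hx hS istar ibar histar hibar1 hibar2 hxib hIoi hne]
    · obtain ⟨t, ht1, hsInf, hP2⟩ := step_spec v hmono hpos x hx hS hne
      have hα : alphaStep v x = 1 - 1/t := alphaStep_eq v x hS hne t hsInf
      have hres1 : resid v x 1 = greedyStep v x := rfl
      rcases Nat.eq_zero_or_pos T with hT0' | hTpos
      · -- base case: ibar exits at the very first step
        subst hT0'
        have hib0 : greedyStep v x ibar = 0 := hT
        rw [Finset.sum_range_one]
        have hm0 : greedyMass v x 0 = alphaStep v x := by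
          unfold greedyMass
          rw [Finset.range_zero, Finset.prod_empty, mul_one]
          rfl
        rw [hm0, hα, lamLow_base v hmono hpos x hx hS hne t ht1 hsInf hP2 istar ibar
          histar hibar1 hibar2 hxib hIoi hib0]
      · -- recursive case
        set x' := greedyStep v x with hx'def
        have hib' : x' ibar ≠ 0 := hTfirst 1 (by omega)
        have hmkt' : IsMarket x' := gs_isMarket v hmono hpos x hx hS hne t hsInf hP2
        have histar' : LargestOptimal v x' istar :=
          gs_largestOptimal v hmono hpos x hx hS hne t ht1 hsInf hP2 istar ibar
            histar hibar1 hxib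
        have hargmax' := gs_ibar_argmax v hmono hpos x hx hS hne t ht1 hsInf hP2 istar ibar
          histar hibar1 hibar2 hibar3 hxib hib'
        have hT' : resid v x' T ibar = 0 := by
          rw [resid_shift v x T]
          exact hT
        have hTfirst' : ∀ l < T, resid v x' l ibar ≠ 0 := by
          intro l hl
          rw [resid_shift v x l]
          exact hTfirst (l + 1) (by omega)
        have hsum' := ih x' hmkt' histar' hargmax'.1 hargmax'.2 hTpos hT' hTfirst'
        rw [mass_dec v x T, hsum', hα,
          lamLow_step v hmono hpos x hx hS hne t ht1 hsInf hP2 istar ibar histar hibar1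
            hibar2 hibar3 hxib hIoi hib']
        ring
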